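/- Let R_1=(r_{1,1},…,r_{1,m}) and R_2=(r_{2,1},…,r_{2,m}) be positive integer m-vectors with weakly decreasing entries, and let C_1=(c_{1,1},…,c_{1,n}) and C_2=(c_{2,1},…,c_{2,n}) be positive integer n-vectors with weakly decreasing entries, such that |R_1|=|R_2|=|C_1|=|C_2|, R_2 dominates R_1, and C_2 dominates C_1. Then T(R_1,C_1;1) ≥ T(R_2,C_2;1), where 1 denotes the m×n matrix of all ones, so that T(R,C;1) is the number of contingency tables with margins (R,C). -/

import Mathlib

open scoped BigOperators

/-- The total weight `T(R,C;W)` of contingency tables with row sums `R`,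
column sums `C`, and weight `∏ W i j ^ D i j` (with the convention `0 ^ 0 = 1`). -/
noncomputable def tableWeight {m n : ℕ} (R : Fin m → ℕ) (C : Fin n → ℕ)
    (W : Fin m → Fin n → ℝ) : ℝ :=
  ∑' D : {D : Fin m → Fin n → ℕ //
      (∀ i, ∑ j, D i j = R i) ∧ (∀ j, ∑ i, D i j = C j)},
    ∏ i, ∏ j, W i j ^ D.1 i j

open scoped BigOperators

/-- symmetric unimodal with center `N` (support in `[0,N]`). -/
def SU (f : ℕ → ℕ) (N : ℕ) : Prop :=
  (∀ a, a ≤ N → f a = f (N - a)) ∧ (∀ a, N < a → f a = 0) ∧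
  (∀ a b, a ≤ b → 2 * b ≤ N → f a ≤ f b)

lemma mono_of_step {h : ℕ → ℕ} {N : ℕ}
    (hs : ∀ a, 2 * (a + 1) ≤ N + 1 → h a ≤ h (a + 1)) :
    ∀ a b, a ≤ b → 2 * b ≤ N → h a ≤ h b := by
  intro a b hab hb
  induction b with
  | zero => exact le_of_eq (by rw [Nat.le_zero.mp hab])
  | succ b ih =>
    rcases Nat.eq_or_lt_of_le hab with rfl | hlt
    · exact le_rfl
    · exact le_trans (ih (by omega) (by omega)) (hs b (by omega))

lemma SU.window {f : ℕ → ℕ} {N : ℕ} (hf : SU f N) (c : ℕ) :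
    SU (fun a => ∑ t ∈ Finset.Icc (a - c) a, f t) (N + c) := by
  obtain ⟨hsym, hvan, hmono⟩ := hf
  have key : ∀ a, (∑ t ∈ Finset.Icc (a - c) a, f t)
      = ∑ t ∈ Finset.range (N + 1), if a - c ≤ t ∧ t ≤ a then f t else 0 := by
    intro a
    rw [← Finset.sum_filter]
    have h1 : (Finset.range (N+1)).filter (fun t => a - c ≤ t ∧ t ≤ a)
        = (Finset.Icc (a-c) a).filter (fun t => t ≤ N) := by
      ext t; simp only [Finset.mem_filter, Finset.mem_range, Finset.mem_Icc]; omega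
    rw [h1, Finset.sum_filter]
    refine Finset.sum_congr rfl fun t _ => ?_
    by_cases hN : t ≤ N
    · simp [hN]
    · simp [hN, hvan t (by omega)]
  refine ⟨?_, ?_, ?_⟩
  · -- symmetry
    intro a ha
    show (∑ t ∈ Finset.Icc (a - c) a, f t) = ∑ t ∈ Finset.Icc ((N+c-a) - c) (N+c-a), f t
    rw [key, key]
    rw [← Finset.sum_range_reflect]
    refine Finset.sum_congr rfl fun t ht => ?_
    rw [Finset.mem_range] at ht
    have ht' : N - t ≤ N := by omega
    have hcond : (a - c ≤ N - t ∧ N - t ≤ a) ↔ ((N + c - a) - c ≤ t ∧ t ≤ N + c - a) := by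
      omega
    have hval : f (N - t) = f t := (hsym t (by omega)).symm
    simp only [Nat.add_sub_cancel]
    by_cases hc : (N + c - a) - c ≤ t ∧ t ≤ N + c - a
    · rw [if_pos (hcond.mpr hc), if_pos hc, hval]
    · rw [if_neg (fun h => hc (hcond.mp h)), if_neg hc]
  · -- vanishing
    intro a ha
    show (∑ t ∈ Finset.Icc (a - c) a, f t) = 0
    refine Finset.sum_eq_zero fun t ht => ?_
    rw [Finset.mem_Icc] at ht
    exact hvan t (by omega)
  · -- monotone
    refine mono_of_step fun a ha => ?_
    show (∑ t ∈ Finset.Icc (a - c) a, f t) ≤ ∑ t ∈ Finset.Icc ((a+1) - c) (a+1), f t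
    by_cases hc : a < c
    · have e1 : a - c = 0 := by omega
      have e2 : a + 1 - c = 0 := by omega
      simp only [e1, e2]
      exact Finset.sum_le_sum_of_subset (Finset.Icc_subset_Icc le_rfl (by omega))
    · push_neg at hc
      have hfle : f (a - c) ≤ f (a + 1) := by
        by_cases h2 : 2*(a+1) ≤ N
        · exact hmono _ _ (by omega) h2
        · have ha1 : a + 1 ≤ N := by omega
          calc f (a-c) ≤ f (N - (a+1)) := hmono _ _ (by omega) (by omega)
            _ = f (a+1) := (hsym (a+1) ha1).symm
      have e1 : Finset.Icc (a-c) a = insert (a-c) (Finset.Icc (a-c+1) a) := by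
        ext t; simp only [Finset.mem_insert, Finset.mem_Icc]; omega
      have e2 : Finset.Icc (a+1-c) (a+1) = insert (a+1) (Finset.Icc (a-c+1) a) := by
        ext t; simp only [Finset.mem_insert, Finset.mem_Icc]; omega
      rw [e1, e2, Finset.sum_insert (by simp [Finset.mem_Icc]),
        Finset.sum_insert (by simp [Finset.mem_Icc])]
      exact Nat.add_le_add_right hfle _

/-- bounded compositions: `x ≤ c` pointwise, `∑ x = a`. -/
def twoF {n : ℕ} (c : Fin n → ℕ) (a : ℕ) : Finset (Fin n → ℕ) :=
  (Fintype.piFinset fun j => Finset.range (c j + 1)).filter (fun x => ∑ j, x j = a)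

lemma mem_twoF {n : ℕ} {c : Fin n → ℕ} {a : ℕ} {x : Fin n → ℕ} :
    x ∈ twoF c a ↔ (∀ j, x j ≤ c j) ∧ ∑ j, x j = a := by
  simp [twoF, Fintype.mem_piFinset, Nat.lt_succ_iff]

lemma twoF_card_succ {n : ℕ} (c : Fin (n+1) → ℕ) (a : ℕ) :
    (twoF c a).card
      = ∑ t ∈ Finset.Icc (a - c 0) a, (twoF (fun j => c j.succ) t).card := by
  rw [Finset.card_eq_sum_card_fiberwise
    (f := fun x => ∑ j, x (Fin.succ j)) (t := Finset.Icc (a - c 0) a) ?hmap]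
  case hmap =>
    intro x hx
    rw [Finset.mem_coe, mem_twoF] at hx
    rw [Finset.mem_coe, Finset.mem_Icc]
    have h0 : x 0 + ∑ j, x (Fin.succ j) = a := by rw [← Fin.sum_univ_succ]; exact hx.2
    have := hx.1 0
    show a - c 0 ≤ ∑ j, x (Fin.succ j) ∧ ∑ j, x (Fin.succ j) ≤ a
    omega
  refine Finset.sum_congr rfl fun t ht => ?_
  rw [Finset.mem_Icc] at ht
  refine Finset.card_bij (fun (x : Fin (n+1) → ℕ) _ => fun j => x (Fin.succ j)) ?_ ?_ ?_
  · intro x hx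
    rw [Finset.mem_filter, mem_twoF] at hx
    exact mem_twoF.mpr ⟨fun j => hx.1.1 j.succ, hx.2⟩
  · intro x hx y hy hxy
    rw [Finset.mem_filter, mem_twoF] at hx hy
    funext j
    refine Fin.cases ?_ ?_ j
    · have hx0 : x 0 + ∑ j, x (Fin.succ j) = a := by rw [← Fin.sum_univ_succ]; exact hx.1.2
      have hy0 : y 0 + ∑ j, y (Fin.succ j) = a := by rw [← Fin.sum_univ_succ]; exact hy.1.2
      rw [hx.2] at hx0; rw [hy.2] at hy0; omega
    · exact fun i => congrFun hxy i
  · intro y hy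
    rw [mem_twoF] at hy
    refine ⟨Fin.cons (a - t) y, ?_, ?_⟩
    · rw [Finset.mem_filter, mem_twoF]
      refine ⟨⟨fun j => ?_, ?_⟩, ?_⟩
      · refine Fin.cases ?_ ?_ j
        · simp only [Fin.cons_zero]; omega
        · intro i; simpa using hy.1 i
      · rw [Fin.sum_univ_succ]
        simp only [Fin.cons_zero, Fin.cons_succ]
        rw [hy.2]; omega
      · simp only [Fin.cons_succ]
        exact hy.2
    · funext j; simp

lemma twoF_SU : ∀ {n : ℕ} (c : Fin n → ℕ), SU (fun a => (twoF c a).card) (∑ j, c j) := by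
  intro n
  induction n with
  | zero =>
    intro c
    refine ⟨?_, ?_, ?_⟩
    · intro a ha
      have : a = 0 := by simpa using ha
      simp [this]
    · intro a ha
      show (twoF c a).card = 0
      rw [Finset.card_eq_zero]
      ext x
      simp only [mem_twoF, Finset.notMem_empty, iff_false]
      rintro ⟨-, h2⟩
      simp at h2 ha; omega
    · intro a b hab hb
      have hb0 : b = 0 := by simpa using hb
      have ha0 : a = 0 := by omega
      rw [ha0, hb0]
  | succ n ih =>
    intro c
    have h := (ih (fun j => c (Fin.succ j))).window (c 0)
    have hN : ∑ j, c j = (∑ j, c (Fin.succ j)) + c 0 := by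
      rw [Fin.sum_univ_succ]; omega
    rw [hN]
    have : (fun a => (twoF c a).card)
        = fun a => ∑ t ∈ Finset.Icc (a - c 0) a, (twoF (fun j => c j.succ) t).card := by
      funext a; exact twoF_card_succ c a
    rw [this]
    exact h

lemma twoF_card_anti {n : ℕ} (c : Fin n → ℕ) {a : ℕ} (h : (∑ j, c j) + 2 ≤ 2 * a) :
    (twoF c a).card ≤ (twoF c (a-1)).card := by
  obtain ⟨hsym, hvan, hmono⟩ := twoF_SU c
  set N := ∑ j, c j with hN
  by_cases haN : a ≤ N
  · calc (twoF c a).card = (twoF c (N - a)).card := hsym a haN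
      _ ≤ (twoF c (N - a + 1)).card := hmono _ _ (by omega) (by omega)
      _ = (twoF c (a - 1)).card := by
          have h2 := hsym (a-1) (by omega)
          have h3 : N - (a-1) = N - a + 1 := by omega
          rw [h3] at h2
          exact h2.symm
  · exact (hvan a (by omega)).trans_le (Nat.zero_le _)

def tablesF {m n : ℕ} (R : Fin m → ℕ) (C : Fin n → ℕ) : Finset (Fin m → Fin n → ℕ) :=
  (Fintype.piFinset fun i => Fintype.piFinset fun _ => Finset.range (R i + 1)).filter
    (fun D => (∀ i, ∑ j, D i j = R i) ∧ (∀ j, ∑ i, D i j = C j))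

lemma mem_tablesF {m n : ℕ} {R : Fin m → ℕ} {C : Fin n → ℕ} {D : Fin m → Fin n → ℕ} :
    D ∈ tablesF R C ↔ (∀ i, ∑ j, D i j = R i) ∧ (∀ j, ∑ i, D i j = C j) := by
  constructor
  · exact fun h => (Finset.mem_filter.mp h).2
  · intro h
    refine Finset.mem_filter.mpr ⟨?_, h⟩
    refine Fintype.mem_piFinset.mpr fun i => Fintype.mem_piFinset.mpr fun j => ?_
    rw [Finset.mem_range, Nat.lt_succ_iff, ← h.1 i]
    exact Finset.single_le_sum (fun _ _ => Nat.zero_le _) (Finset.mem_univ j)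

section Transfer

variable {m n : ℕ} (C : Fin n → ℕ) (p q : Fin m) (hpq : p ≠ q)

/-- split a sum over `Fin m` into the `p`, `q` terms and the rest. -/
lemma sum_split (hpq : p ≠ q) (v : Fin m → ℕ) :
    ∑ i, v i = v p + v q + ∑ i, (if i = p ∨ i = q then 0 else v i) := by
  have hv : ∀ i : Fin m, v i
      = (if i = p ∨ i = q then 0 else v i) + ((if i = p then v p else 0) + (if i = q then v q else 0)) := by
    intro i
    rcases eq_or_ne i p with rfl | h1
    · simp [hpq]
    · rcases eq_or_ne i q with rfl | h2
      · simp [h1]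
      · simp [h1, h2]
  calc ∑ i, v i = ∑ i, ((if i = p ∨ i = q then 0 else v i)
        + ((if i = p then v p else 0) + (if i = q then v q else 0))) :=
        Finset.sum_congr rfl fun i _ => hv i
    _ = v p + v q + ∑ i, (if i = p ∨ i = q then 0 else v i) := by
        rw [Finset.sum_add_distrib, Finset.sum_add_distrib, Finset.sum_ite_eq' Finset.univ p,
          Finset.sum_ite_eq' Finset.univ q]
        simp [add_comm, add_assoc, add_left_comm]

/-- the "off rows" projection. -/
def offRows (D : Fin m → Fin n → ℕ) : Fin m → Fin n → ℕ :=
  fun i j => if i = p ∨ i = q then 0 else D i j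

/-- admissibility of an off-rows pattern. -/
def GoodE (R : Fin m → ℕ) (E : Fin m → Fin n → ℕ) : Prop :=
  (∀ j, E p j = 0) ∧ (∀ j, E q j = 0) ∧ (∀ i, i ≠ p → i ≠ q → ∑ j, E i j = R i) ∧
  (∀ j, ∑ i, E i j ≤ C j)

lemma fiber_empty {R : Fin m → ℕ} {E : Fin m → Fin n → ℕ} (hpq : p ≠ q)
    (hbad : ¬ GoodE C p q R E) :
    (tablesF R C).filter (fun D => offRows p q D = E) = ∅ := by
  rw [Finset.filter_eq_empty_iff]
  intro D hD
  rw [mem_tablesF] at hD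
  intro hE
  apply hbad
  refine ⟨?_, ?_, ?_, ?_⟩
  · intro j; rw [← hE]; simp [offRows]
  · intro j; rw [← hE]; simp [offRows]
  · intro i h1 h2
    rw [← hE]
    simpa [offRows, h1, h2] using hD.1 i
  · intro j
    rw [← hE, ← hD.2 j]
    refine Finset.sum_le_sum fun i _ => ?_
    by_cases h : i = p ∨ i = q <;> simp [offRows, h]

lemma fiber_card {R : Fin m → ℕ} {E : Fin m → Fin n → ℕ} (hpq : p ≠ q)
    (hRC : ∑ i, R i = ∑ j, C j)
    (hgood : GoodE C p q R E) :
    ((tablesF R C).filter (fun D => offRows p q D = E)).card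
      = (twoF (fun j => C j - ∑ i, E i j) (R p)).card := by
  obtain ⟨hEp, hEq, hErow, hEcol⟩ := hgood
  set c' : Fin n → ℕ := fun j => C j - ∑ i, E i j with hc'
  have hsumE : ∑ j, ∑ i, E i j = ∑ i, R i - R p - R q := by
    rw [Finset.sum_comm]
    have h1 : ∀ i : Fin m, ∑ j, E i j = (if i = p ∨ i = q then 0 else R i) := by
      intro i
      by_cases h1 : i = p
      · subst h1; simp [hEp]
      · by_cases h2 : i = q
        · subst h2; simp [hEq]
        · simp [h1, h2, hErow i h1 h2]
    rw [Finset.sum_congr rfl fun i _ => h1 i]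
    have hsplit := sum_split p q hpq R
    omega
  have hsumc' : ∑ j, c' j = R p + R q := by
    rw [hc', Finset.sum_tsub_distrib Finset.univ (fun j _ => hEcol j), hsumE, ← hRC]
    have hsplit := sum_split p q hpq R
    omega
  refine Finset.card_bij (fun D _ => D p) ?_ ?_ ?_
  · intro D hD
    rw [Finset.mem_filter, mem_tablesF] at hD
    obtain ⟨⟨hrow, hcol⟩, hE⟩ := hD
    rw [mem_twoF]
    constructor
    · intro j
      have hs := sum_split p q hpq (fun i => D i j)
      have hEj : ∑ i, E i j = ∑ i, (if i = p ∨ i = q then 0 else D i j) :=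
        Finset.sum_congr rfl fun i _ => (congrFun (congrFun hE i) j).symm
      have := hcol j
      simp only [hc']
      omega
    · exact hrow p
  · -- injectivity
    intro D1 h1 D2 h2 heq
    rw [Finset.mem_filter, mem_tablesF] at h1 h2
    obtain ⟨⟨hrow1, hcol1⟩, hE1⟩ := h1
    obtain ⟨⟨hrow2, hcol2⟩, hE2⟩ := h2
    have hp12 : ∀ j, D1 p j = D2 p j := fun j => congrFun heq j
    funext i j
    by_cases hip : i = p
    · subst hip; exact hp12 j
    · by_cases hiq : i = q
      · subst hiq
        have hs1 := sum_split p i hpq (fun i' => D1 i' j)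
        have hs2 := sum_split p i hpq (fun i' => D2 i' j)
        have he1 : ∑ i', (if i' = p ∨ i' = i then 0 else D1 i' j) = ∑ i', E i' j :=
          Finset.sum_congr rfl fun i' _ => congrFun (congrFun hE1 i') j
        have he2 : ∑ i', (if i' = p ∨ i' = i then 0 else D2 i' j) = ∑ i', E i' j :=
          Finset.sum_congr rfl fun i' _ => congrFun (congrFun hE2 i') j
        have hc1 := hcol1 j
        have hc2 := hcol2 j
        have hpj := hp12 j
        omega
      · have e1 : D1 i j = E i j := by
          have := congrFun (congrFun hE1 i) j
          simpa [offRows, hip, hiq] using this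
        have e2 : D2 i j = E i j := by
          have := congrFun (congrFun hE2 i) j
          simpa [offRows, hip, hiq] using this
        rw [e1, e2]
  · -- surjectivity
    intro x hx
    rw [mem_twoF] at hx
    obtain ⟨hxle, hxsum⟩ := hx
    refine ⟨fun i j => if i = p then x j else if i = q then c' j - x j else E i j, ?_,
      by simp [hpq]⟩
    rw [Finset.mem_filter, mem_tablesF]
    refine ⟨⟨?_, ?_⟩, ?_⟩
    · intro i
      by_cases h1 : i = p
      · subst h1; simpa using hxsum
      · by_cases h2 : i = q
        · have hv : ∀ j', (if q = p then x j' else if q = q then c' j' - x j' else E q j')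
              = c' j' - x j' := by intro j'; simp [hpq.symm]
          rw [h2]
          rw [Finset.sum_congr rfl fun j' _ => hv j',
            Finset.sum_tsub_distrib Finset.univ (fun j' _ => hxle j'), hsumc', hxsum]
          omega
        · have hv : ∀ j, (if i = p then x j else if i = q then c' j - x j else E i j)
              = E i j := by intro j; simp [h1, h2]
          rw [Finset.sum_congr rfl fun j _ => hv j]
          exact hErow i h1 h2
    · intro j
      have hs := sum_split p q hpq
        (fun i => if i = p then x j else if i = q then c' j - x j else E i j)
      have hvp : (if p = p then x j else if p = q then c' j - x j else E p j) = x j := by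
        simp
      have hvq : (if q = p then x j else if q = q then c' j - x j else E q j)
          = c' j - x j := by simp [hpq.symm]
      have he : ∑ i, (if i = p ∨ i = q then 0 else
          if i = p then x j else if i = q then c' j - x j else E i j) = ∑ i, E i j := by
        refine Finset.sum_congr rfl fun i _ => ?_
        by_cases h1 : i = p
        · subst h1; simp [hEp]
        · by_cases h2 : i = q
          · subst h2; simp [hEq]
          · simp [h1, h2]
      have hxc := hxle j
      have hEC := hEcol j
      have hcj : c' j = C j - ∑ i, E i j := rfl
      omega
    · funext i j
      by_cases h1 : i = p
      · subst h1; simp [offRows, hEp j]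
      · by_cases h2 : i = q
        · subst h2; simp [offRows, hEq j]
        · simp [offRows, h1, h2]

lemma GoodE_sum {R : Fin m → ℕ} {E : Fin m → Fin n → ℕ} (hpq : p ≠ q)
    (hRC : ∑ i, R i = ∑ j, C j) (hgood : GoodE C p q R E) :
    ∑ j, (C j - ∑ i, E i j) = R p + R q := by
  obtain ⟨hEp, hEq, hErow, hEcol⟩ := hgood
  have hsumE : ∑ j, ∑ i, E i j = ∑ i, R i - R p - R q := by
    rw [Finset.sum_comm]
    have h1 : ∀ i : Fin m, ∑ j, E i j = (if i = p ∨ i = q then 0 else R i) := by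
      intro i
      by_cases h1 : i = p
      · subst h1; simp [hEp]
      · by_cases h2 : i = q
        · subst h2; simp [hEq]
        · simp [h1, h2, hErow i h1 h2]
    rw [Finset.sum_congr rfl fun i _ => h1 i]
    have hsplit := sum_split p q hpq R
    omega
  rw [Finset.sum_tsub_distrib Finset.univ (fun j _ => hEcol j), hsumE, ← hRC]
  have hsplit := sum_split p q hpq R
  omega

lemma tablesF_transfer {R R' : Fin m → ℕ} (hpq : p ≠ q)
    (hRC : ∑ i, R i = ∑ j, C j) (h2 : R q + 2 ≤ R p)
    (hR'p : R' p = R p - 1) (hR'q : R' q = R q + 1)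
    (hR'o : ∀ i, i ≠ p → i ≠ q → R' i = R i) :
    (tablesF R C).card ≤ (tablesF R' C).card := by
  classical
  have hR'C : ∑ i, R' i = ∑ j, C j := by
    have hs := sum_split p q hpq R
    have hs' := sum_split p q hpq R'
    have hoff : ∑ i, (if i = p ∨ i = q then 0 else R' i)
        = ∑ i, (if i = p ∨ i = q then 0 else R i) := by
      refine Finset.sum_congr rfl fun i _ => ?_
      by_cases h1 : i = p
      · simp [h1]
      · by_cases hq : i = q
        · simp [hq]
        · simp [h1, hq, hR'o i h1 hq]
    omega
  have hmaps : ∀ (Rv : Fin m → ℕ), ∀ D ∈ tablesF Rv C, offRows p q D ∈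
      (Fintype.piFinset fun _ : Fin m => Fintype.piFinset fun j => Finset.range (C j + 1)) := by
    intro Rv D hD
    rw [mem_tablesF] at hD
    refine Fintype.mem_piFinset.mpr fun i => Fintype.mem_piFinset.mpr fun j => ?_
    rw [Finset.mem_range, Nat.lt_succ_iff]
    have hle : offRows p q D i j ≤ D i j := by
      by_cases h : i = p ∨ i = q <;> simp [offRows, h]
    refine hle.trans ?_
    rw [← hD.2 j]
    exact Finset.single_le_sum (f := fun i => D i j) (fun _ _ => Nat.zero_le _)
      (Finset.mem_univ i)
  rw [Finset.card_eq_sum_card_fiberwise (hmaps R),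
    Finset.card_eq_sum_card_fiberwise (hmaps R')]
  refine Finset.sum_le_sum fun E _ => ?_
  by_cases hg : GoodE C p q R E
  · have hg' : GoodE C p q R' E := by
      obtain ⟨a, b, c, d⟩ := hg
      exact ⟨a, b, fun i h1 h2 => by rw [hR'o i h1 h2]; exact c i h1 h2, d⟩
    rw [fiber_card C p q hpq hRC hg, fiber_card C p q hpq hR'C hg', hR'p]
    apply twoF_card_anti
    rw [GoodE_sum C p q hpq hRC hg]
    omega
  · have hg' : ¬ GoodE C p q R' E := by
      intro h
      obtain ⟨a, b, c, d⟩ := h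
      exact hg ⟨a, b, fun i h1 h2 => by rw [← hR'o i h1 h2]; exact c i h1 h2, d⟩
    rw [fiber_empty C p q hpq hg, fiber_empty C p q hpq hg']

end Transfer

section Chain

variable {m n : ℕ}

/-- prefix sums. -/
def Spre (R : Fin m → ℕ) (K : ℕ) : ℕ :=
  ∑ i ∈ Finset.univ.filter (fun i : Fin m => (i : ℕ) < K), R i

lemma Spre_zero (R : Fin m → ℕ) : Spre R 0 = 0 := by
  simp [Spre]

lemma Spre_succ (R : Fin m → ℕ) {K : ℕ} (hK : K < m) :
    Spre R (K + 1) = Spre R K + R ⟨K, hK⟩ := by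
  unfold Spre
  have : Finset.univ.filter (fun i : Fin m => (i : ℕ) < K + 1)
      = insert ⟨K, hK⟩ (Finset.univ.filter (fun i : Fin m => (i : ℕ) < K)) := by
    ext i
    simp only [Finset.mem_filter, Finset.mem_univ, true_and, Finset.mem_insert, Fin.ext_iff]
    omega
  rw [this, Finset.sum_insert (by simp)]
  omega

lemma Spre_ge (R : Fin m → ℕ) {K : ℕ} (hK : m ≤ K) : Spre R K = ∑ i, R i := by
  unfold Spre
  congr 1
  ext i
  simpa using lt_of_lt_of_le i.isLt hK

lemma transfer_sum {p q : Fin m} {R R' : Fin m → ℕ} (hpq : p ≠ q) (h2 : R q + 2 ≤ R p)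
    (hR'p : R' p = R p - 1) (hR'q : R' q = R q + 1)
    (hR'o : ∀ i, i ≠ p → i ≠ q → R' i = R i) : ∑ i, R' i = ∑ i, R i := by
  have hs := sum_split p q hpq R
  have hs' := sum_split p q hpq R'
  have hoff : ∑ i, (if i = p ∨ i = q then 0 else R' i)
      = ∑ i, (if i = p ∨ i = q then 0 else R i) := by
    refine Finset.sum_congr rfl fun i _ => ?_
    by_cases h1 : i = p
    · simp [h1]
    · by_cases hq : i = q
      · simp [hq]
      · simp [h1, hq, hR'o i h1 hq]
  omega

lemma tablesF_chain (C : Fin n → ℕ) (R₁ : Fin m → ℕ)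
    (hdec : ∀ i i' : Fin m, i ≤ i' → R₁ i' ≤ R₁ i) :
    ∀ d : ℕ, ∀ R₂ : Fin m → ℕ, (∑ i, R₁ i = ∑ i, R₂ i) → (∑ i, R₂ i = ∑ j, C j) →
    (∀ K, Spre R₁ K ≤ Spre R₂ K) →
    (∑ K ∈ Finset.range (m + 1), (Spre R₂ K - Spre R₁ K)) = d →
    (tablesF R₂ C).card ≤ (tablesF R₁ C).card := by
  intro d
  induction d using Nat.strong_induction_on with
  | _ d ih =>
  intro R₂ hs12 hs2C hdom hd
  classical
  by_cases heq : R₁ = R₂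
  · rw [heq]
  · -- find k : first index of difference
    have hex : ∃ i : ℕ, ∃ h : i < m, R₁ ⟨i, h⟩ ≠ R₂ ⟨i, h⟩ := by
      obtain ⟨i, hi⟩ := Function.ne_iff.mp heq
      exact ⟨i.1, i.2, by simpa using hi⟩
    obtain ⟨k, hkm, hkne, hkmin⟩ :
        ∃ k, ∃ h : k < m, R₁ ⟨k, h⟩ ≠ R₂ ⟨k, h⟩ ∧
          ∀ i (h' : i < m), i < k → R₁ ⟨i, h'⟩ = R₂ ⟨i, h'⟩ := by
      obtain ⟨h1, h2⟩ := Nat.find_spec hex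
      refine ⟨Nat.find hex, h1, h2, fun i h' hik => ?_⟩
      by_contra hne
      exact Nat.find_min hex hik ⟨h', hne⟩
    have hSeq : ∀ K, K ≤ k → Spre R₁ K = Spre R₂ K := by
      intro K
      induction K with
      | zero => intro _; rw [Spre_zero, Spre_zero]
      | succ K ihK =>
        intro hKk
        have hKm : K < m := by omega
        rw [Spre_succ R₁ hKm, Spre_succ R₂ hKm, ihK (by omega), hkmin K hKm (by omega)]
    have hSm : Spre R₁ m = Spre R₂ m := by
      rw [Spre_ge R₁ le_rfl, Spre_ge R₂ le_rfl, hs12]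
    have hlt : R₁ ⟨k, hkm⟩ < R₂ ⟨k, hkm⟩ := by
      have h1 := hdom (k + 1)
      rw [Spre_succ R₁ hkm, Spre_succ R₂ hkm, hSeq k le_rfl] at h1
      omega
    -- find l
    have hkm1 : k + 1 < m := by
      by_contra hc
      have hk1 : k + 1 = m := by omega
      have h2 : Spre R₁ (k+1) = Spre R₂ (k+1) := by rw [hk1]; exact hSm
      rw [Spre_succ R₁ hkm, Spre_succ R₂ hkm, hSeq k le_rfl] at h2
      omega
    have hexl : ∃ j : ℕ, k < j ∧ (j < m ∧ Spre R₁ (j+1) = Spre R₂ (j+1)) := by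
      refine ⟨m - 1, by omega, by omega, ?_⟩
      rw [show m - 1 + 1 = m by omega, hSm]
    obtain ⟨l, hkl, hlm, hSl, hlmin⟩ :
        ∃ l, k < l ∧ l < m ∧ Spre R₁ (l+1) = Spre R₂ (l+1) ∧
          ∀ j, k < j → j < l → Spre R₁ (j+1) ≠ Spre R₂ (j+1) := by
      obtain ⟨a, b, c⟩ := Nat.find_spec hexl
      refine ⟨Nat.find hexl, a, b, c, fun j hkj hjl hne => ?_⟩
      exact Nat.find_min hexl hjl ⟨hkj, by omega, hne⟩
    have hstrict : ∀ K, k < K → K ≤ l → Spre R₁ K < Spre R₂ K := by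
      intro K hkK hKl
      rcases Nat.eq_or_lt_of_le hkK with h | h
      · rw [← h] at hKl ⊢
        rw [Spre_succ R₁ hkm, Spre_succ R₂ hkm, hSeq k le_rfl]
        omega
      · have hne := hlmin (K - 1) (by omega) (by omega)
        rw [show K - 1 + 1 = K by omega] at hne
        exact lt_of_le_of_ne (hdom K) hne
    have hR2l : R₂ ⟨l, hlm⟩ < R₁ ⟨l, hlm⟩ := by
      have h1 := hstrict l (by omega) le_rfl
      have h2 := hSl
      rw [Spre_succ R₁ hlm, Spre_succ R₂ hlm] at h2
      omega
    have h2 : R₂ ⟨l, hlm⟩ + 2 ≤ R₂ ⟨k, hkm⟩ := by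
      have := hdec ⟨k, hkm⟩ ⟨l, hlm⟩ (by simp [Fin.le_def]; omega)
      omega
    have hpq : (⟨k, hkm⟩ : Fin m) ≠ ⟨l, hlm⟩ := by
      simp only [ne_eq, Fin.mk.injEq]
      omega
    set R₂' := Function.update (Function.update R₂ ⟨k, hkm⟩ (R₂ ⟨k, hkm⟩ - 1))
      ⟨l, hlm⟩ (R₂ ⟨l, hlm⟩ + 1) with hR₂'def
    have hR'p : R₂' ⟨k, hkm⟩ = R₂ ⟨k, hkm⟩ - 1 := by
      rw [hR₂'def, Function.update_of_ne hpq, Function.update_self]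
    have hR'q : R₂' ⟨l, hlm⟩ = R₂ ⟨l, hlm⟩ + 1 := by
      rw [hR₂'def, Function.update_self]
    have hR'o : ∀ i, i ≠ ⟨k, hkm⟩ → i ≠ ⟨l, hlm⟩ → R₂' i = R₂ i := by
      intro i ha hb
      rw [hR₂'def, Function.update_of_ne hb, Function.update_of_ne ha]
    have hsum' : ∑ i, R₂' i = ∑ i, R₂ i := transfer_sum hpq h2 hR'p hR'q hR'o
    have hS' : ∀ K, K ≤ m → Spre R₂' K + (if k < K ∧ K ≤ l then 1 else 0) = Spre R₂ K := by
      intro K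
      induction K with
      | zero => intro _; rw [Spre_zero, Spre_zero]; simp
      | succ K ihK =>
        intro hKm'
        have hKm : K < m := by omega
        have hih := ihK (by omega)
        rw [Spre_succ R₂' hKm, Spre_succ R₂ hKm]
        have hb : (R₂' ⟨K, hKm⟩ = R₂ ⟨K, hKm⟩ + 1 ∧ K = l) ∨
            (R₂' ⟨K, hKm⟩ + 1 = R₂ ⟨K, hKm⟩ ∧ K = k) ∨
            (R₂' ⟨K, hKm⟩ = R₂ ⟨K, hKm⟩ ∧ K ≠ k ∧ K ≠ l) := by
          by_cases h1 : K = l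
          · left
            have e : (⟨K, hKm⟩ : Fin m) = ⟨l, hlm⟩ := by
              simp only [Fin.mk.injEq]; omega
            rw [e, hR'q]
            exact ⟨rfl, h1⟩
          · by_cases h2' : K = k
            · right; left
              have e : (⟨K, hKm⟩ : Fin m) = ⟨k, hkm⟩ := by
                simp only [Fin.mk.injEq]; omega
              rw [e, hR'p]
              exact ⟨by omega, h2'⟩
            · right; right
              have e1 : (⟨K, hKm⟩ : Fin m) ≠ ⟨k, hkm⟩ := by
                simp only [ne_eq, Fin.mk.injEq]; omega
              have e2 : (⟨K, hKm⟩ : Fin m) ≠ ⟨l, hlm⟩ := by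
                simp only [ne_eq, Fin.mk.injEq]; omega
              exact ⟨hR'o _ e1 e2, h2', h1⟩
        split_ifs at hih ⊢ <;> rcases hb with ⟨hb1, hb2⟩ | ⟨hb1, hb2⟩ | ⟨hb1, hb2, hb3⟩ <;> omega
    have hdom' : ∀ K, Spre R₁ K ≤ Spre R₂' K := by
      intro K
      by_cases hKm' : K ≤ m
      · have hSK := hS' K hKm'
        have hdK := hdom K
        split_ifs at hSK with hc
        · have hst := hstrict K hc.1 hc.2
          omega
        · omega
      · rw [Spre_ge R₁ (by omega), Spre_ge R₂' (by omega), hsum']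
        omega
    have hmeas : ∑ K ∈ Finset.range (m + 1), (Spre R₂' K - Spre R₁ K) < d := by
      rw [← hd]
      refine Finset.sum_lt_sum (fun K hK => ?_) ⟨k + 1, Finset.mem_range.mpr (by omega), ?_⟩
      · rw [Finset.mem_range] at hK
        have hSK := hS' K (by omega)
        have hdK := hdom K
        have hdK' := hdom' K
        split_ifs at hSK <;> omega
      · have hSK := hS' (k + 1) (by omega)
        rw [if_pos (by omega)] at hSK
        have hst := hstrict (k + 1) (by omega) (by omega)
        omega
    calc (tablesF R₂ C).card ≤ (tablesF R₂' C).card :=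
          tablesF_transfer C ⟨k, hkm⟩ ⟨l, hlm⟩ hpq hs2C h2 hR'p hR'q hR'o
      _ ≤ (tablesF R₁ C).card :=
          ih _ hmeas R₂' (hs12.trans hsum'.symm) (hsum'.trans hs2C) hdom' rfl

end Chain

lemma tablesF_transpose {m n : ℕ} (R : Fin m → ℕ) (C : Fin n → ℕ) :
    (tablesF R C).card = (tablesF C R).card := by
  refine Finset.card_bij (fun D _ => fun j i => D i j) ?_ ?_ ?_
  · intro D hD
    rw [mem_tablesF] at hD ⊢
    exact ⟨hD.2, hD.1⟩
  · intro D1 h1 D2 h2 heq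
    funext i j
    exact congrFun (congrFun heq j) i
  · intro Dt hDt
    rw [mem_tablesF] at hDt
    exact ⟨fun i j => Dt j i, mem_tablesF.mpr ⟨hDt.2, hDt.1⟩, rfl⟩

lemma tableWeight_one {m n : ℕ} (R : Fin m → ℕ) (C : Fin n → ℕ) :
    tableWeight R C (fun _ _ => (1:ℝ)) = (tablesF R C).card := by
  unfold tableWeight
  have : ∀ D : {D : Fin m → Fin n → ℕ //
      (∀ i, ∑ j, D i j = R i) ∧ (∀ j, ∑ i, D i j = C j)},
      (∏ i, ∏ j, (1:ℝ) ^ D.1 i j) = 1 := by intro D; simp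
  rw [tsum_congr this]
  have e : {D : Fin m → Fin n → ℕ //
      (∀ i, ∑ j, D i j = R i) ∧ (∀ j, ∑ i, D i j = C j)} ≃ {D // D ∈ tablesF R C} :=
    Equiv.subtypeEquivRight (fun D => mem_tablesF.symm)
  have : Nat.card {D : Fin m → Fin n → ℕ //
      (∀ i, ∑ j, D i j = R i) ∧ (∀ j, ∑ i, D i j = C j)} = (tablesF R C).card := by
    rw [Nat.card_congr e, Nat.card_eq_finsetCard]
  rw [tsum_const, this, nsmul_eq_mul, mul_one]

theorem tableCount_antitone_domination {m n : ℕ}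
    (R₁ R₂ : Fin m → ℕ) (C₁ C₂ : Fin n → ℕ)
    (hR₁pos : ∀ i, 0 < R₁ i) (hR₂pos : ∀ i, 0 < R₂ i)
    (hC₁pos : ∀ j, 0 < C₁ j) (hC₂pos : ∀ j, 0 < C₂ j)
    -- weakly decreasing entries
    (hR₁dec : ∀ i i' : Fin m, i ≤ i' → R₁ i' ≤ R₁ i)
    (hR₂dec : ∀ i i' : Fin m, i ≤ i' → R₂ i' ≤ R₂ i)
    (hC₁dec : ∀ j j' : Fin n, j ≤ j' → C₁ j' ≤ C₁ j)
    (hC₂dec : ∀ j j' : Fin n, j ≤ j' → C₂ j' ≤ C₂ j)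
    -- equal total sums
    (h₁₂ : ∑ i, R₁ i = ∑ i, R₂ i)
    (h₂₃ : ∑ i, R₂ i = ∑ j, C₁ j)
    (h₃₄ : ∑ j, C₁ j = ∑ j, C₂ j)
    -- R₂ dominates R₁ and C₂ dominates C₁
    (hRdom : ∀ K : ℕ, ∑ i ∈ Finset.univ.filter (fun i : Fin m => (i : ℕ) < K), R₁ i ≤
        ∑ i ∈ Finset.univ.filter (fun i : Fin m => (i : ℕ) < K), R₂ i)
    (hCdom : ∀ K : ℕ, ∑ j ∈ Finset.univ.filter (fun j : Fin n => (j : ℕ) < K), C₁ j ≤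
        ∑ j ∈ Finset.univ.filter (fun j : Fin n => (j : ℕ) < K), C₂ j) :
    tableWeight R₁ C₁ (fun _ _ => (1 : ℝ)) ≥ tableWeight R₂ C₂ (fun _ _ => (1 : ℝ)) := by
  rw [tableWeight_one, tableWeight_one]
  have step1 : (tablesF R₂ C₂).card ≤ (tablesF R₂ C₁).card := by
    rw [tablesF_transpose R₂ C₂, tablesF_transpose R₂ C₁]
    refine tablesF_chain R₂ C₁ hC₁dec _ C₂ h₃₄ ?_ (fun K => hCdom K) rfl
    omega
  have step2 : (tablesF R₂ C₁).card ≤ (tablesF R₁ C₁).card :=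
    tablesF_chain C₁ R₁ hR₁dec _ R₂ h₁₂ h₂₃ (fun K => hRdom K) rfl
  exact_mod_cast le_trans step1 step2
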